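/- Let d ≥ 3 be an odd integer and κ ≥ 1 an integer coprime to d. Let a ≥ 1 and b ≥ 0 be integers, let x_1 > x_2 > … > x_a ≥ 0 and y_1 > y_2 > … > y_b ≥ 0 be integers with x_1 ≥ y_j for all j, and set n = (Σ_{i=1}^{a} x_i) + (Σ_{j=1}^{b} y_j) − ⌊(a+b−1)²/4⌋ (a nonnegative integer). Then π_{κ/d}( ∏_{i=n+1}^{n+d}(q^{2i} − 1) · ∏_{i=2}^{a}(q^{x_1+d} − q^{x_i}) · ∏_{i=1}^{b}(q^{x_1+d} + q^{y_i}) ) − π_{κ/d}( ∏_{i=x_1+1}^{x_1+d}(q^{2i} − 1) · ∏_{i=2}^{a}(q^{x_1} − q^{x_i}) · ∏_{i=1}^{b}(q^{x_1} + q^{y_i}) ) = 2κ(2n − 2x_1 + a + b − 1). -/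

import Mathlib

open Polynomial
open Real

/-- `argCount t f` is the cardinality of the multiset `Arg_t(f)` of real numbers `λ` with
`0 < λ ≤ 2πt` such that `e^{iλ}` is a (complex) root of the real polynomial `f`, each such `λ`
counted with the multiplicity of `e^{iλ}` as a root of `f`. -/
noncomputable def argCount (t : ℝ) (f : Polynomial ℝ) : ℕ :=
  ((f.map (algebraMap ℝ ℂ)).roots.map fun ξ =>
    Nat.card {l : ℝ // 0 < l ∧ l ≤ 2 * Real.pi * t ∧ Complex.exp ((l : ℂ) * Complex.I) = ξ}).sum

/-- `piFn κ d f` is the rational number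
`π_{κ/d}(f) = (a(f) + A(f))·(κ/d) + |Arg_{κ/d}(f)| + (1/2)·(multiplicity of 1 as a root of f)`,
where `a(f)` is the multiplicity of `0` as a root of `f` and `A(f)` is the degree of `f`. -/
noncomputable def piFn (κ d : ℕ) (f : Polynomial ℝ) : ℚ :=
  ((rootMultiplicity 0 f : ℚ) + (f.natDegree : ℚ)) * (κ : ℚ) / (d : ℚ)
    + (argCount ((κ : ℝ) / (d : ℝ)) f : ℚ) + (rootMultiplicity 1 f : ℚ) / 2

lemma argCount_mul (t : ℝ) {f g : Polynomial ℝ} (hf : f ≠ 0) (hg : g ≠ 0) :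
    argCount t (f * g) = argCount t f + argCount t g := by
  unfold argCount
  have hf' : f.map (algebraMap ℝ ℂ) ≠ 0 :=
    (Polynomial.map_ne_zero_iff (algebraMap ℝ ℂ).injective).mpr hf
  have hg' : g.map (algebraMap ℝ ℂ) ≠ 0 :=
    (Polynomial.map_ne_zero_iff (algebraMap ℝ ℂ).injective).mpr hg
  rw [Polynomial.map_mul, Polynomial.roots_mul (mul_ne_zero hf' hg'), Multiset.map_add,
    Multiset.sum_add]

lemma piFn_mul (κ d : ℕ) {f g : Polynomial ℝ} (hf : f ≠ 0) (hg : g ≠ 0) :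
    piFn κ d (f * g) = piFn κ d f + piFn κ d g := by
  unfold piFn
  rw [Polynomial.rootMultiplicity_mul (mul_ne_zero hf hg),
    Polynomial.rootMultiplicity_mul (mul_ne_zero hf hg),
    Polynomial.natDegree_mul hf hg, argCount_mul _ hf hg]
  push_cast
  ring

lemma piFn_prod (κ d : ℕ) {ι : Type*} (s : Finset ι) (f : ι → Polynomial ℝ)
    (h : ∀ i ∈ s, f i ≠ 0) :
    piFn κ d (∏ i ∈ s, f i) = ∑ i ∈ s, piFn κ d (f i) := by
  induction s using Finset.cons_induction with
  | empty =>
    have h1 : ∀ x : ℝ, rootMultiplicity x (1 : Polynomial ℝ) = 0 := fun x =>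
      Polynomial.rootMultiplicity_eq_zero (by simp [Polynomial.IsRoot])
    simp [piFn, argCount, h1]
  | cons i s hi ih =>
    rw [Finset.prod_cons, Finset.sum_cons,
      piFn_mul κ d (h i (Finset.mem_cons_self i s))
        (Finset.prod_ne_zero_iff.mpr fun j hj => h j (Finset.mem_cons_of_mem hj)),
      ih fun j hj => h j (Finset.mem_cons_of_mem hj)]

lemma sum_card_fiber (B : ℝ) (s : Finset ℂ)
    (hfin : {l : ℝ | 0 < l ∧ l ≤ B ∧ Complex.exp ((l : ℂ) * Complex.I) ∈ (s : Set ℂ)}.Finite) :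
    ∑ ξ ∈ s, Nat.card {l : ℝ // 0 < l ∧ l ≤ B ∧ Complex.exp ((l : ℂ) * Complex.I) = ξ}
      = Nat.card {l : ℝ | 0 < l ∧ l ≤ B ∧ Complex.exp ((l : ℂ) * Complex.I) ∈ (s : Set ℂ)} := by
  classical
  induction s using Finset.induction with
  | empty => simp
  | insert ξ s hξ ih =>
    have hsub : {l : ℝ | 0 < l ∧ l ≤ B ∧ Complex.exp ((l : ℂ) * Complex.I) ∈ (s : Set ℂ)}
        ⊆ {l : ℝ | 0 < l ∧ l ≤ B ∧ Complex.exp ((l : ℂ) * Complex.I) ∈ (↑(insert ξ s) : Set ℂ)} := by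
      intro l ⟨h1, h2, h3⟩; exact ⟨h1, h2, by simp [h3]⟩
    have hsubξ : {l : ℝ | 0 < l ∧ l ≤ B ∧ Complex.exp ((l : ℂ) * Complex.I) = ξ}
        ⊆ {l : ℝ | 0 < l ∧ l ≤ B ∧ Complex.exp ((l : ℂ) * Complex.I) ∈ (↑(insert ξ s) : Set ℂ)} := by
      intro l ⟨h1, h2, h3⟩; exact ⟨h1, h2, by simp [h3]⟩
    have hunion : {l : ℝ | 0 < l ∧ l ≤ B ∧ Complex.exp ((l : ℂ) * Complex.I) ∈ (↑(insert ξ s) : Set ℂ)}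
        = {l : ℝ | 0 < l ∧ l ≤ B ∧ Complex.exp ((l : ℂ) * Complex.I) = ξ}
          ∪ {l : ℝ | 0 < l ∧ l ≤ B ∧ Complex.exp ((l : ℂ) * Complex.I) ∈ (s : Set ℂ)} := by
      ext l
      simp only [Set.mem_setOf_eq, Set.mem_union, Finset.coe_insert, Set.mem_insert_iff]
      tauto
    have hdisj : Disjoint {l : ℝ | 0 < l ∧ l ≤ B ∧ Complex.exp ((l : ℂ) * Complex.I) = ξ}
        {l : ℝ | 0 < l ∧ l ≤ B ∧ Complex.exp ((l : ℂ) * Complex.I) ∈ (s : Set ℂ)} := by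
      rw [Set.disjoint_left]
      rintro l ⟨_, _, h3⟩ ⟨_, _, h3'⟩
      exact hξ (by rwa [← h3])
    rw [Finset.sum_insert hξ, ih (hfin.subset hsub)]
    have e1 : Nat.card {l : ℝ // 0 < l ∧ l ≤ B ∧ Complex.exp ((l : ℂ) * Complex.I) = ξ}
        = ({l : ℝ | 0 < l ∧ l ≤ B ∧ Complex.exp ((l : ℂ) * Complex.I) = ξ}).ncard :=
      Nat.card_coe_set_eq _
    rw [e1, hunion, Nat.card_coe_set_eq, Nat.card_coe_set_eq,
      Set.ncard_union_eq hdisj (hfin.subset hsubξ) (hfin.subset hsub)]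

lemma setEq_one {m : ℕ} (hm : m ≠ 0) {t : ℝ} (ht : 0 ≤ t) :
    {l : ℝ | 0 < l ∧ l ≤ 2 * π * t ∧ Complex.exp ((l : ℂ) * Complex.I) ^ m = 1}
      = (fun j : ℕ => 2 * π * j / m) '' Set.Icc 1 ⌊(m : ℝ) * t⌋₊ := by
  have hm0 : (0 : ℝ) < m := by positivity
  ext l
  simp only [Set.mem_setOf_eq, Set.mem_image, Set.mem_Icc]
  constructor
  · rintro ⟨hl0, hlt, hexp⟩
    rw [← Complex.exp_nat_mul, Complex.exp_eq_one_iff] at hexp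
    obtain ⟨k, hk⟩ := hexp
    have hk' : ((m * l : ℝ) : ℂ) * Complex.I = ((k * (2 * π) : ℝ) : ℂ) * Complex.I := by
      push_cast
      linear_combination hk
    have hr : (m : ℝ) * l = k * (2 * π) :=
      Complex.ofReal_injective (mul_right_cancel₀ Complex.I_ne_zero hk')
    have hkpos : 0 < k := by
      by_contra hneg
      push_neg at hneg
      have : (k : ℝ) * (2 * π) ≤ 0 := by
        apply mul_nonpos_of_nonpos_of_nonneg
        · exact_mod_cast hneg
        · positivity
      nlinarith
    refine ⟨k.toNat, ⟨by omega, ?_⟩, ?_⟩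
    · rw [Nat.le_floor_iff (by positivity)]
      have hc : ((k.toNat : ℝ)) = (k : ℝ) := by exact_mod_cast Int.toNat_of_nonneg hkpos.le
      rw [hc]
      have h1 : (m : ℝ) * l ≤ (m : ℝ) * (2 * π * t) := by
        apply mul_le_mul_of_nonneg_left hlt (by positivity)
      rw [hr] at h1
      have hpi := Real.pi_pos
      nlinarith
    · have hc : ((k.toNat : ℝ)) = (k : ℝ) := by exact_mod_cast Int.toNat_of_nonneg hkpos.le
      rw [hc]
      field_simp
      linarith [hr]
  · rintro ⟨j, ⟨hj1, hjN⟩, rfl⟩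
    have hπ := Real.pi_pos
    have hj0 : (0 : ℝ) < j := by exact_mod_cast hj1
    refine ⟨by positivity, ?_, ?_⟩
    · have : (j : ℝ) ≤ (m : ℝ) * t := by
        calc (j : ℝ) ≤ (⌊(m : ℝ) * t⌋₊ : ℝ) := by exact_mod_cast hjN
        _ ≤ (m : ℝ) * t := Nat.floor_le (by positivity)
      rw [div_le_iff₀ hm0]
      nlinarith
    · rw [← Complex.exp_nat_mul, Complex.exp_eq_one_iff]
      refine ⟨j, ?_⟩
      have hmC : (m : ℂ) ≠ 0 := by exact_mod_cast hm0.ne'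
      push_cast
      field_simp

lemma pifn_card_one {m : ℕ} (hm : m ≠ 0) {t : ℝ} (ht : 0 ≤ t) :
    Nat.card {l : ℝ | 0 < l ∧ l ≤ 2 * π * t ∧ Complex.exp ((l : ℂ) * Complex.I) ^ m = 1}
      = ⌊(m : ℝ) * t⌋₊ ∧
    {l : ℝ | 0 < l ∧ l ≤ 2 * π * t ∧ Complex.exp ((l : ℂ) * Complex.I) ^ m = 1}.Finite := by
  have hπ := Real.pi_pos
  have hm0 : (0 : ℝ) < m := by positivity
  have hinj : Function.Injective (fun j : ℕ => 2 * π * j / m) := by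
    intro i j h
    simp only at h
    have h1 : 2 * π * (i : ℝ) = 2 * π * (j : ℝ) := by
      have := congrArg (fun z : ℝ => z * m) h
      simpa [div_mul_cancel₀, ne_of_gt hm0] using this
    have h2 : (i : ℝ) = j := mul_left_cancel₀ (by positivity) h1
    exact_mod_cast h2
  rw [setEq_one hm ht]
  constructor
  · rw [Nat.card_coe_set_eq, Set.ncard_image_of_injective _ hinj, ← Finset.coe_Icc,
      Set.ncard_coe_finset, Nat.card_Icc]
    omega
  · exact (Set.finite_Icc _ _).image _

lemma setEq_negone {m : ℕ} (hm : m ≠ 0) {t : ℝ} (ht : 0 ≤ t) :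
    {l : ℝ | 0 < l ∧ l ≤ 2 * π * t ∧ Complex.exp ((l : ℂ) * Complex.I) ^ m = -1}
      = (fun j : ℕ => (2 * π * j - π) / m) '' Set.Icc 1 ⌊(m : ℝ) * t + 1 / 2⌋₊ := by
  have hπ := Real.pi_pos
  have hm0 : (0 : ℝ) < m := by positivity
  ext l
  simp only [Set.mem_setOf_eq, Set.mem_image, Set.mem_Icc]
  constructor
  · rintro ⟨hl0, hlt, hexp⟩
    rw [← Complex.exp_nat_mul, ← Complex.exp_pi_mul_I,
      Complex.exp_eq_exp_iff_exists_int] at hexp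
    obtain ⟨k, hk⟩ := hexp
    have hk' : ((m * l : ℝ) : ℂ) * Complex.I = ((π + k * (2 * π) : ℝ) : ℂ) * Complex.I := by
      push_cast
      linear_combination hk
    have hr : (m : ℝ) * l = π + k * (2 * π) :=
      Complex.ofReal_injective (mul_right_cancel₀ Complex.I_ne_zero hk')
    have hknn : 0 ≤ k := by
      by_contra hneg
      push_neg at hneg
      have hk1 : (k : ℝ) ≤ -1 := by
        have : k ≤ -1 := by omega
        exact_mod_cast this
      nlinarith
    refine ⟨k.toNat + 1, ⟨by omega, ?_⟩, ?_⟩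
    · rw [Nat.le_floor_iff (by positivity)]
      have hc : ((k.toNat : ℝ)) = (k : ℝ) := by exact_mod_cast Int.toNat_of_nonneg hknn
      push_cast
      rw [hc]
      have h1 : (m : ℝ) * l ≤ (m : ℝ) * (2 * π * t) :=
        mul_le_mul_of_nonneg_left hlt (by positivity)
      rw [hr] at h1
      nlinarith
    · have hc : ((k.toNat : ℝ)) = (k : ℝ) := by exact_mod_cast Int.toNat_of_nonneg hknn
      push_cast
      rw [hc]
      field_simp
      linarith [hr]
  · rintro ⟨j, ⟨hj1, hjN⟩, rfl⟩
    have hj0 : (1 : ℝ) ≤ j := by exact_mod_cast hj1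
    have hnum : 0 < 2 * π * (j : ℝ) - π := by nlinarith
    refine ⟨div_pos hnum hm0, ?_, ?_⟩
    · have : (j : ℝ) ≤ (m : ℝ) * t + 1 / 2 := by
        calc (j : ℝ) ≤ (⌊(m : ℝ) * t + 1 / 2⌋₊ : ℝ) := by exact_mod_cast hjN
        _ ≤ (m : ℝ) * t + 1 / 2 := Nat.floor_le (by positivity)
      rw [div_le_iff₀ hm0]
      nlinarith
    · rw [← Complex.exp_nat_mul, ← Complex.exp_pi_mul_I,
        Complex.exp_eq_exp_iff_exists_int]
      refine ⟨(j : ℤ) - 1, ?_⟩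
      have hmC : (m : ℂ) ≠ 0 := by exact_mod_cast hm0.ne'
      push_cast
      field_simp
      ring

lemma pifn_card_negone {m : ℕ} (hm : m ≠ 0) {t : ℝ} (ht : 0 ≤ t) :
    Nat.card {l : ℝ | 0 < l ∧ l ≤ 2 * π * t ∧ Complex.exp ((l : ℂ) * Complex.I) ^ m = -1}
      = ⌊(m : ℝ) * t + 1 / 2⌋₊ ∧
    {l : ℝ | 0 < l ∧ l ≤ 2 * π * t ∧ Complex.exp ((l : ℂ) * Complex.I) ^ m = -1}.Finite := by
  have hπ := Real.pi_pos
  have hm0 : (0 : ℝ) < m := by positivity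
  have hinj : Function.Injective (fun j : ℕ => (2 * π * j - π) / m) := by
    intro i j h
    simp only at h
    have h1 : 2 * π * (i : ℝ) - π = 2 * π * (j : ℝ) - π := by
      have := congrArg (fun z : ℝ => z * m) h
      simpa [div_mul_cancel₀, ne_of_gt hm0] using this
    have h2 : (i : ℝ) = j := by
      have h2π : (0 : ℝ) < 2 * π := by positivity
      nlinarith
    exact_mod_cast h2
  rw [setEq_negone hm ht]
  constructor
  · rw [Nat.card_coe_set_eq, Set.ncard_image_of_injective _ hinj, ← Finset.coe_Icc,
      Set.ncard_coe_finset, Nat.card_Icc]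
    omega
  · exact (Set.finite_Icc _ _).image _

lemma argCount_sub_C (t : ℝ) {m : ℕ} (hm : m ≠ 0) {c : ℝ} (hc : c ≠ 0)
    (hfin : {l : ℝ | 0 < l ∧ l ≤ 2 * π * t
      ∧ Complex.exp ((l : ℂ) * Complex.I) ^ m = (c : ℂ)}.Finite) :
    argCount t (X ^ m - C c)
      = Nat.card {l : ℝ | 0 < l ∧ l ≤ 2 * π * t
          ∧ Complex.exp ((l : ℂ) * Complex.I) ^ m = (c : ℂ)} := by
  classical
  have hmap : ((X : Polynomial ℝ) ^ m - C c).map (algebraMap ℝ ℂ) = X ^ m - C (c : ℂ) := by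
    simp [Polynomial.map_sub, Polynomial.map_pow]
  have hne : ((X : Polynomial ℂ) ^ m - C (c : ℂ)) ≠ 0 := by
    intro h
    have := natDegree_X_pow_sub_C (n := m) (r := (c : ℂ))
    rw [h, natDegree_zero] at this
    exact hm this.symm
  have hsep : ((X : Polynomial ℂ) ^ m - C (c : ℂ)).Separable :=
    Polynomial.separable_X_pow_sub_C _ ((Nat.cast_ne_zero (R := ℂ)).mpr hm)
      (by exact_mod_cast hc)
  have hnd : ((X : Polynomial ℂ) ^ m - C (c : ℂ)).roots.Nodup := Polynomial.nodup_roots hsep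
  set R := ((X : Polynomial ℂ) ^ m - C (c : ℂ)).roots with hR
  have hmem : ∀ ξ : ℂ, ξ ∈ R.toFinset ↔ ξ ^ m = (c : ℂ) := by
    intro ξ
    rw [Multiset.mem_toFinset, hR, Polynomial.mem_roots hne]
    simp only [IsRoot.def, eval_sub, eval_pow, eval_X, eval_C, sub_eq_zero]
  have hsetEq : {l : ℝ | 0 < l ∧ l ≤ 2 * π * t
        ∧ Complex.exp ((l : ℂ) * Complex.I) ∈ (R.toFinset : Set ℂ)}
      = {l : ℝ | 0 < l ∧ l ≤ 2 * π * t
        ∧ Complex.exp ((l : ℂ) * Complex.I) ^ m = (c : ℂ)} := by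
    ext l
    simp only [Set.mem_setOf_eq, Finset.mem_coe, hmem]
  have hRval : R = R.toFinset.val := by
    rw [Multiset.toFinset_val, Multiset.dedup_eq_self.mpr hnd]
  unfold argCount
  rw [hmap, ← hR, hRval, ← Finset.sum_eq_multiset_sum,
    sum_card_fiber _ _ (by rw [hsetEq]; exact hfin), hsetEq]

noncomputable def flr (κ d m : ℕ) : ℕ := ⌊(m : ℝ) * ((κ : ℝ) / (d : ℝ))⌋₊
noncomputable def flrH (κ d m : ℕ) : ℕ := ⌊(m : ℝ) * ((κ : ℝ) / (d : ℝ)) + 1 / 2⌋₊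

lemma flr_shift (κ d m : ℕ) (hd : d ≠ 0) : flr κ d (m + d) = flr κ d m + κ := by
  have hd0 : (0 : ℝ) < d := by positivity
  have h : ((m + d : ℕ) : ℝ) * ((κ : ℝ) / (d : ℝ)) = (m : ℝ) * ((κ : ℝ) / (d : ℝ)) + κ := by
    push_cast
    field_simp
  rw [flr, flr, h, Nat.floor_add_natCast (by positivity)]

lemma flrH_shift (κ d m : ℕ) (hd : d ≠ 0) : flrH κ d (m + d) = flrH κ d m + κ := by
  have hd0 : (0 : ℝ) < d := by positivity
  have h : ((m + d : ℕ) : ℝ) * ((κ : ℝ) / (d : ℝ)) + 1 / 2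
      = ((m : ℝ) * ((κ : ℝ) / (d : ℝ)) + 1 / 2) + κ := by
    push_cast
    field_simp
    ring
  rw [flrH, flrH, h, Nat.floor_add_natCast (by positivity)]


lemma X_pow_sub_one_ne_zero {m : ℕ} (hm : m ≠ 0) : ((X : Polynomial ℝ) ^ m - 1) ≠ 0 := by
  intro h
  rw [← C_1] at h
  have := natDegree_X_pow_sub_C (n := m) (r := (1 : ℝ))
  rw [h, natDegree_zero] at this
  exact hm this.symm

lemma X_pow_add_one_ne_zero (m : ℕ) : ((X : Polynomial ℝ) ^ m + 1) ≠ 0 := by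
  intro h
  have := congrArg (eval 1) h
  simp at this

lemma piFn_X_pow_sub_one (κ d : ℕ) {m : ℕ} (hm : m ≠ 0) :
    piFn κ d (X ^ m - 1) = (m : ℚ) * κ / d + (flr κ d m : ℚ) + 1 / 2 := by
  have ht : (0 : ℝ) ≤ (κ : ℝ) / (d : ℝ) := by positivity
  have hsep : ((X : Polynomial ℝ) ^ m - C 1).Separable :=
    Polynomial.separable_X_pow_sub_C _ ((Nat.cast_ne_zero (R := ℝ)).mpr hm) one_ne_zero
  have hne : ((X : Polynomial ℝ) ^ m - 1) ≠ 0 := X_pow_sub_one_ne_zero hm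
  have h0 : rootMultiplicity 0 ((X : Polynomial ℝ) ^ m - 1) = 0 :=
    rootMultiplicity_eq_zero (by simp [IsRoot, zero_pow hm])
  have h1 : rootMultiplicity 1 ((X : Polynomial ℝ) ^ m - 1) = 1 := by
    refine le_antisymm ?_ ?_
    · rw [← C_1]
      exact rootMultiplicity_le_one_of_separable hsep 1
    · exact (rootMultiplicity_pos hne).mpr (by simp [IsRoot])
  have harg : argCount ((κ : ℝ) / (d : ℝ)) ((X : Polynomial ℝ) ^ m - 1) = flr κ d m := by
    rw [← C_1, argCount_sub_C _ hm one_ne_zero]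
    · rw [Complex.ofReal_one]
      exact (pifn_card_one hm ht).1
    · rw [Complex.ofReal_one]
      exact (pifn_card_one hm ht).2
  have hdeg : ((X : Polynomial ℝ) ^ m - 1).natDegree = m := by
    rw [← C_1]; exact natDegree_X_pow_sub_C
  rw [piFn, h0, h1, harg, hdeg]
  push_cast
  ring

lemma piFn_X_pow_add_one (κ d : ℕ) (m : ℕ) :
    piFn κ d (X ^ m + 1) = (m : ℚ) * κ / d + (flrH κ d m : ℚ) := by
  have ht : (0 : ℝ) ≤ (κ : ℝ) / (d : ℝ) := by positivity
  rcases Nat.eq_zero_or_pos m with rfl | hm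
  · have hpoly : ((X : Polynomial ℝ) ^ 0 + 1) = C 2 := by
      norm_num
      rfl
    have hflrH : flrH κ d 0 = 0 := by
      rw [flrH]
      apply Nat.floor_eq_zero.mpr
      norm_num
    have h0 : ∀ x : ℝ, rootMultiplicity x (C (2 : ℝ)) = 0 := fun x =>
      rootMultiplicity_eq_zero (by simp [IsRoot])
    have harg : argCount ((κ : ℝ) / (d : ℝ)) (C (2 : ℝ)) = 0 := by
      unfold argCount
      rw [map_C]
      simp
    rw [hpoly, piFn, h0, h0, harg, hflrH, natDegree_C]
    norm_num
  have hm' : m ≠ 0 := hm.ne'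
  have hpoly : ((X : Polynomial ℝ) ^ m + 1) = X ^ m - C (-1) := by
    rw [map_neg, C_1, sub_neg_eq_add]
  have hne : ((X : Polynomial ℝ) ^ m + 1) ≠ 0 := X_pow_add_one_ne_zero m
  have h0 : rootMultiplicity 0 ((X : Polynomial ℝ) ^ m + 1) = 0 :=
    rootMultiplicity_eq_zero (by simp [IsRoot, zero_pow hm'])
  have h1 : rootMultiplicity 1 ((X : Polynomial ℝ) ^ m + 1) = 0 := by
    refine rootMultiplicity_eq_zero ?_
    simp [IsRoot]
  have hcast : ((-1 : ℝ) : ℂ) = -1 := by push_cast; ring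
  have harg : argCount ((κ : ℝ) / (d : ℝ)) ((X : Polynomial ℝ) ^ m + 1) = flrH κ d m := by
    rw [hpoly, argCount_sub_C _ hm' (neg_ne_zero.mpr one_ne_zero)]
    · rw [hcast]
      exact (pifn_card_negone hm' ht).1
    · rw [hcast]
      exact (pifn_card_negone hm' ht).2
  have hdeg : ((X : Polynomial ℝ) ^ m + 1).natDegree = m := by
    rw [hpoly]; exact natDegree_X_pow_sub_C
  rw [piFn, h0, h1, harg, hdeg]
  push_cast
  ring

lemma piFn_X_pow (κ d : ℕ) (v : ℕ) :
    piFn κ d (X ^ v) = 2 * (v : ℚ) * κ / d := by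
  have h0 : rootMultiplicity 0 ((X : Polynomial ℝ) ^ v) = v := by
    have : ((X : Polynomial ℝ) ^ v) = (X - C 0) ^ v := by rw [C_0, sub_zero]
    rw [this, rootMultiplicity_X_sub_C_pow]
  have h1 : rootMultiplicity 1 ((X : Polynomial ℝ) ^ v) = 0 :=
    rootMultiplicity_eq_zero (by simp [IsRoot])
  have hcard : Nat.card {l : ℝ // 0 < l ∧ l ≤ 2 * Real.pi * ((κ : ℝ) / (d : ℝ))
      ∧ Complex.exp ((l : ℂ) * Complex.I) = 0} = 0 := by
    have : IsEmpty {l : ℝ // 0 < l ∧ l ≤ 2 * Real.pi * ((κ : ℝ) / (d : ℝ))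
        ∧ Complex.exp ((l : ℂ) * Complex.I) = 0} :=
      ⟨fun ⟨l, _, _, h⟩ => Complex.exp_ne_zero _ h⟩
    exact Nat.card_of_isEmpty
  have harg : argCount ((κ : ℝ) / (d : ℝ)) ((X : Polynomial ℝ) ^ v) = 0 := by
    unfold argCount
    rw [Polynomial.map_pow, map_X, roots_pow, roots_X]
    rw [Multiset.map_nsmul, Multiset.map_singleton, hcard, Multiset.nsmul_singleton]
    simp
  rw [piFn, h0, h1, harg, natDegree_X_pow]
  push_cast
  ring

lemma piFn_X_sub_X (κ d : ℕ) {u v : ℕ} (h : v < u) :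
    piFn κ d (X ^ u - X ^ v) = ((u : ℚ) + v) * κ / d + (flr κ d (u - v) : ℚ) + 1 / 2 := by
  have heq : ((X : Polynomial ℝ) ^ u - X ^ v) = X ^ v * (X ^ (u - v) - 1) := by
    rw [mul_sub, mul_one, ← pow_add, Nat.add_sub_cancel' h.le]
  rw [heq, piFn_mul κ d (pow_ne_zero _ X_ne_zero) (X_pow_sub_one_ne_zero (by omega)),
    piFn_X_pow, piFn_X_pow_sub_one κ d (m := u - v) (by omega)]
  have : ((u - v : ℕ) : ℚ) = (u : ℚ) - v := by
    push_cast [Nat.cast_sub h.le]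
    ring
  rw [this]
  ring

lemma piFn_X_add_X (κ d : ℕ) {u v : ℕ} (h : v ≤ u) :
    piFn κ d (X ^ u + X ^ v) = ((u : ℚ) + v) * κ / d + (flrH κ d (u - v) : ℚ) := by
  have heq : ((X : Polynomial ℝ) ^ u + X ^ v) = X ^ v * (X ^ (u - v) + 1) := by
    rw [mul_add, mul_one, ← pow_add, Nat.add_sub_cancel' h]
  rw [heq, piFn_mul κ d (pow_ne_zero _ X_ne_zero) (X_pow_add_one_ne_zero _),
    piFn_X_pow, piFn_X_pow_add_one]
  have : ((u - v : ℕ) : ℚ) = (u : ℚ) - v := by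
    push_cast [Nat.cast_sub h]
    ring
  rw [this]
  ring

lemma pifn_window (d : ℕ) (c : ℚ) (g : ℕ → ℚ) (hg : ∀ i, g (i + d) = g i + c) (n : ℕ) :
    ∑ i ∈ Finset.Ioc n (n + d), g i = (∑ i ∈ Finset.Ioc 0 d, g i) + n * c := by
  induction n with
  | zero => simp
  | succ n ih =>
    have h1 : ∑ i ∈ Finset.Ioc n (n + d + 1), g i
        = (∑ i ∈ Finset.Ioc n (n + d), g i) + g (n + d + 1) :=
      Finset.sum_Ioc_succ_top (by omega) g
    have h2 : ∑ i ∈ Finset.Ioc n (n + d + 1), g i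
        = (∑ i ∈ Finset.Ioc n (n + 1), g i) + ∑ i ∈ Finset.Ioc (n + 1) (n + d + 1), g i :=
      (Finset.sum_Ioc_consecutive g (by omega) (by omega)).symm
    have h3 : Finset.Ioc n (n + 1) = {n + 1} := Nat.Ioc_succ_singleton n
    have h4 : g (n + d + 1) = g (n + 1) + c := by
      have := hg (n + 1)
      rwa [show n + 1 + d = n + d + 1 by omega] at this
    have h5 : ∑ i ∈ Finset.Ioc (n + 1) (n + 1 + d), g i
        = (∑ i ∈ Finset.Ioc n (n + d), g i) + c := by
      rw [show n + 1 + d = n + d + 1 by omega]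
      have h6 := h1.symm.trans h2
      rw [h3, Finset.sum_singleton] at h6
      linarith
    rw [h5, ih]
    push_cast
    ring

/-- Section 9 (symplectic and odd-dimensional orthogonal groups, `d` odd): for a symbol
`{X,Y}` with `x 1 > … > x a ≥ 0`, `y 1 > … > y b ≥ 0`, `x 1 ≥ y j` for all `j`, of rank
`n = Σ x_i + Σ y_j − ⌊(a+b−1)²/4⌋`,
`π_{κ/d}(∏_{i=n+1}^{n+d}(q^{2i}−1)·∏_{i=2}^{a}(q^{x_1+d}−q^{x_i})·∏_{i=1}^{b}(q^{x_1+d}+q^{y_i}))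
 − π_{κ/d}(∏_{i=x_1+1}^{x_1+d}(q^{2i}−1)·∏_{i=2}^{a}(q^{x_1}−q^{x_i})·∏_{i=1}^{b}(q^{x_1}+q^{y_i}))
 = 2κ(2n − 2x_1 + a + b − 1)`. -/
theorem piFn_Sp_min (κ d : ℕ) (hd : 3 ≤ d) (hodd : Odd d) (hκ : 1 ≤ κ)
    (hcop : Nat.Coprime κ d)
    (a b : ℕ) (ha : 1 ≤ a) (x y : ℕ → ℕ)
    (hx : ∀ i, 1 ≤ i → i < a → x (i + 1) < x i)
    (hy : ∀ j, 1 ≤ j → j < b → y (j + 1) < y j)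
    (hxy : ∀ j, 1 ≤ j → j ≤ b → y j ≤ x 1)
    (n : ℕ)
    (hn : (n : ℤ) = (∑ i ∈ Finset.Icc 1 a, (x i : ℤ)) + (∑ j ∈ Finset.Icc 1 b, (y j : ℤ))
      - (((a + b - 1) ^ 2 / 4 : ℕ) : ℤ)) :
    piFn κ d ((∏ i ∈ Finset.Ioc n (n + d), (X ^ (2 * i) - 1)) *
          (∏ i ∈ Finset.Icc 2 a, (X ^ (x 1 + d) - X ^ x i)) *
          ∏ i ∈ Finset.Icc 1 b, (X ^ (x 1 + d) + X ^ y i)) -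
        piFn κ d ((∏ i ∈ Finset.Ioc (x 1) (x 1 + d), (X ^ (2 * i) - 1)) *
          (∏ i ∈ Finset.Icc 2 a, (X ^ (x 1) - X ^ x i)) *
          ∏ i ∈ Finset.Icc 1 b, (X ^ (x 1) + X ^ y i)) =
      2 * (κ : ℚ) * (2 * (n : ℚ) - 2 * (x 1 : ℚ) + (a : ℚ) + (b : ℚ) - 1) := by
  classical
  have hd0 : d ≠ 0 := by omega
  have hdQ : (d : ℚ) ≠ 0 := by exact_mod_cast hd0
  have hxlt : ∀ i, 2 ≤ i → i ≤ a → x i < x 1 := by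
    intro i
    induction i with
    | zero => intro h _; exact absurd h (by omega)
    | succ i ih =>
      intro h2 hle
      rcases Nat.lt_or_ge i 2 with hi | hi
      · have hi1 : i = 1 := by omega
        subst hi1
        exact hx 1 le_rfl (by omega)
      · exact lt_trans (hx i (by omega) (by omega)) (ih (by omega) (by omega))
  have hA1 : ∀ i ∈ Finset.Ioc n (n + d), ((X : Polynomial ℝ) ^ (2 * i) - 1) ≠ 0 := by
    intro i hi
    rw [Finset.mem_Ioc] at hi
    exact X_pow_sub_one_ne_zero (by omega)
  have hA2 : ∀ i ∈ Finset.Ioc (x 1) (x 1 + d), ((X : Polynomial ℝ) ^ (2 * i) - 1) ≠ 0 := by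
    intro i hi
    rw [Finset.mem_Ioc] at hi
    exact X_pow_sub_one_ne_zero (by omega)
  have hXsub_ne : ∀ u v : ℕ, v < u → ((X : Polynomial ℝ) ^ u - X ^ v) ≠ 0 := by
    intro u v huv h
    have heq : ((X : Polynomial ℝ) ^ u - X ^ v) = X ^ v * (X ^ (u - v) - 1) := by
      rw [mul_sub, mul_one, ← pow_add, Nat.add_sub_cancel' huv.le]
    rw [heq] at h
    rcases mul_eq_zero.mp h with h' | h'
    · exact pow_ne_zero _ X_ne_zero h'
    · exact X_pow_sub_one_ne_zero (by omega) h'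
  have hXadd_ne : ∀ u v : ℕ, ((X : Polynomial ℝ) ^ u + X ^ v) ≠ 0 := by
    intro u v h
    have := congrArg (eval 1) h
    simp at this
  have hB1 : ∀ i ∈ Finset.Icc 2 a, ((X : Polynomial ℝ) ^ (x 1 + d) - X ^ (x i)) ≠ 0 := by
    intro i hi
    rw [Finset.mem_Icc] at hi
    exact hXsub_ne _ _ (by have := hxlt i hi.1 hi.2; omega)
  have hB2 : ∀ i ∈ Finset.Icc 2 a, ((X : Polynomial ℝ) ^ (x 1) - X ^ (x i)) ≠ 0 := by
    intro i hi
    rw [Finset.mem_Icc] at hi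
    exact hXsub_ne _ _ (hxlt i hi.1 hi.2)
  have hC1 : ∀ i ∈ Finset.Icc 1 b, ((X : Polynomial ℝ) ^ (x 1 + d) + X ^ (y i)) ≠ 0 :=
    fun i _ => hXadd_ne _ _
  have hC2 : ∀ i ∈ Finset.Icc 1 b, ((X : Polynomial ℝ) ^ (x 1) + X ^ (y i)) ≠ 0 :=
    fun i _ => hXadd_ne _ _
  rw [piFn_mul κ d (mul_ne_zero (Finset.prod_ne_zero_iff.mpr hA1)
        (Finset.prod_ne_zero_iff.mpr hB1)) (Finset.prod_ne_zero_iff.mpr hC1),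
      piFn_mul κ d (Finset.prod_ne_zero_iff.mpr hA1) (Finset.prod_ne_zero_iff.mpr hB1),
      piFn_mul κ d (mul_ne_zero (Finset.prod_ne_zero_iff.mpr hA2)
        (Finset.prod_ne_zero_iff.mpr hB2)) (Finset.prod_ne_zero_iff.mpr hC2),
      piFn_mul κ d (Finset.prod_ne_zero_iff.mpr hA2) (Finset.prod_ne_zero_iff.mpr hB2),
      piFn_prod κ d _ _ hA1, piFn_prod κ d _ _ hB1, piFn_prod κ d _ _ hC1,
      piFn_prod κ d _ _ hA2, piFn_prod κ d _ _ hB2, piFn_prod κ d _ _ hC2]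
  have hGshift : ∀ i, (fun i : ℕ => ((2 * i : ℕ) : ℚ) * (κ : ℚ) / (d : ℚ)
      + (flr κ d (2 * i) : ℚ) + 1 / 2) (i + d)
      = (fun i : ℕ => ((2 * i : ℕ) : ℚ) * (κ : ℚ) / (d : ℚ)
        + (flr κ d (2 * i) : ℚ) + 1 / 2) i + 4 * κ := by
    intro i
    simp only
    rw [show 2 * (i + d) = 2 * i + d + d by ring, flr_shift κ d _ hd0, flr_shift κ d _ hd0]
    push_cast
    field_simp
    ring
  have hwin := pifn_window d (4 * κ) (fun i : ℕ => ((2 * i : ℕ) : ℚ) * (κ : ℚ) / (d : ℚ)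
      + (flr κ d (2 * i) : ℚ) + 1 / 2) hGshift
  have hSA1 : ∑ i ∈ Finset.Ioc n (n + d), piFn κ d ((X : Polynomial ℝ) ^ (2 * i) - 1)
      = (∑ i ∈ Finset.Ioc 0 d, (((2 * i : ℕ) : ℚ) * (κ : ℚ) / (d : ℚ)
          + (flr κ d (2 * i) : ℚ) + 1 / 2)) + n * (4 * κ) := by
    rw [← hwin n]
    exact Finset.sum_congr rfl fun i hi => piFn_X_pow_sub_one κ d
      (by rw [Finset.mem_Ioc] at hi; omega)
  have hSA2 : ∑ i ∈ Finset.Ioc (x 1) (x 1 + d), piFn κ d ((X : Polynomial ℝ) ^ (2 * i) - 1)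
      = (∑ i ∈ Finset.Ioc 0 d, (((2 * i : ℕ) : ℚ) * (κ : ℚ) / (d : ℚ)
          + (flr κ d (2 * i) : ℚ) + 1 / 2)) + (x 1) * (4 * κ) := by
    rw [← hwin (x 1)]
    exact Finset.sum_congr rfl fun i hi => piFn_X_pow_sub_one κ d
      (by rw [Finset.mem_Ioc] at hi; omega)
  have hSB : (∑ i ∈ Finset.Icc 2 a, piFn κ d ((X : Polynomial ℝ) ^ (x 1 + d) - X ^ (x i)))
      - (∑ i ∈ Finset.Icc 2 a, piFn κ d ((X : Polynomial ℝ) ^ (x 1) - X ^ (x i)))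
      = ((a : ℚ) - 1) * (2 * κ) := by
    rw [← Finset.sum_sub_distrib]
    have hterm : ∀ i ∈ Finset.Icc 2 a,
        piFn κ d ((X : Polynomial ℝ) ^ (x 1 + d) - X ^ (x i))
          - piFn κ d ((X : Polynomial ℝ) ^ (x 1) - X ^ (x i)) = 2 * (κ : ℚ) := by
      intro i hi
      rw [Finset.mem_Icc] at hi
      have hxi := hxlt i hi.1 hi.2
      rw [piFn_X_sub_X κ d (show x i < x 1 + d by omega), piFn_X_sub_X κ d hxi,
        show x 1 + d - x i = (x 1 - x i) + d by omega, flr_shift κ d _ hd0]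
      push_cast
      field_simp
      try ring
    rw [Finset.sum_congr rfl hterm, Finset.sum_const, Nat.card_Icc, nsmul_eq_mul]
    have hc : ((a + 1 - 2 : ℕ) : ℚ) = (a : ℚ) - 1 := by
      have h2 : a + 1 - 2 = a - 1 := by omega
      rw [h2]
      push_cast [Nat.cast_sub ha]
      ring
    rw [hc]
    try ring
  have hSC : (∑ i ∈ Finset.Icc 1 b, piFn κ d ((X : Polynomial ℝ) ^ (x 1 + d) + X ^ (y i)))
      - (∑ i ∈ Finset.Icc 1 b, piFn κ d ((X : Polynomial ℝ) ^ (x 1) + X ^ (y i)))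
      = (b : ℚ) * (2 * κ) := by
    rw [← Finset.sum_sub_distrib]
    have hterm : ∀ i ∈ Finset.Icc 1 b,
        piFn κ d ((X : Polynomial ℝ) ^ (x 1 + d) + X ^ (y i))
          - piFn κ d ((X : Polynomial ℝ) ^ (x 1) + X ^ (y i)) = 2 * (κ : ℚ) := by
      intro i hi
      rw [Finset.mem_Icc] at hi
      have hyi := hxy i hi.1 hi.2
      rw [piFn_X_add_X κ d (show y i ≤ x 1 + d by omega), piFn_X_add_X κ d hyi,
        show x 1 + d - y i = (x 1 - y i) + d by omega, flrH_shift κ d _ hd0]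
      push_cast
      field_simp
      try ring
    rw [Finset.sum_congr rfl hterm, Finset.sum_const, Nat.card_Icc, nsmul_eq_mul]
    have hc : ((b + 1 - 1 : ℕ) : ℚ) = (b : ℚ) := by
      have h2 : b + 1 - 1 = b := by omega
      rw [h2]
    rw [hc]
    try ring
  rw [hSA1, hSA2]
  linarith [hSB, hSC]
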